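/- For every integer n ≥ 2 there exists a balanced bipartite graph B on 2n vertices with minimum degree exactly ⌈n/2⌉ and forest number n + 2. -/

import Mathlib

open Finset SimpleGraph


lemma walk_closed {W : Type*} {H : SimpleGraph W} (C : Set W)
    (hC : ∀ ⦃x y⦄, x ∈ C → H.Adj x y → y ∈ C) {u v : W} (p : H.Walk u v) (hu : u ∈ C) :
    v ∈ C := by
  induction p with
  | nil => exact hu
  | cons h p ih => exact ih (hC hu h)

lemma not_reachable_of_closed {W : Type*} {H : SimpleGraph W} (C : Set W)
    (hC : ∀ ⦃x y⦄, x ∈ C → H.Adj x y → y ∈ C) {u v : W} (hu : u ∈ C) (hv : v ∉ C) :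
    ¬ H.Reachable u v := fun h => h.elim fun p => hv (walk_closed C hC p hu)

lemma not_acyclic_of_fourCycle {W : Type*} {H : SimpleGraph W} {a b c d : W}
    (hab : H.Adj a b) (hbc : H.Adj b c) (hcd : H.Adj c d) (hda : H.Adj d a)
    (hac : a ≠ c) (hbd : b ≠ d) : ¬ H.IsAcyclic := by
  intro h
  have h1 := hab.ne; have h2 := hbc.ne; have h3 := hcd.ne; have h4 := hda.ne
  exact h (.cons hab (.cons hbc (.cons hcd (.cons hda .nil))))
    (by
      constructor
      · exact ⟨by simp [Walk.isTrail_def, List.Nodup]; tauto, by simp⟩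
      · simp [Walk.support_cons]; tauto)

def mrel (n : ℕ) (u v : Fin (2*n)) : Prop :=
  u.val < n ∧ n ≤ v.val ∧ ¬(u.val = 0 ∧ v.val < n + n/2) ∧ ¬(u.val = 1 ∧ n + (n+1)/2 ≤ v.val)

instance (n : ℕ) (u v : Fin (2*n)) : Decidable (mrel n u v) := by unfold mrel; infer_instance

def BG (n : ℕ) : SimpleGraph (Fin (2*n)) where
  Adj u v := mrel n u v ∨ mrel n v u
  symm := ⟨fun u v h => h.symm⟩
  loopless := ⟨fun u h => by rcases h with h|h <;> · obtain ⟨h1, h2, -⟩ := h; omega⟩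

instance (n : ℕ) : DecidableRel (BG n).Adj :=
  fun u v => inferInstanceAs (Decidable (mrel n u v ∨ mrel n v u))

lemma BG_adj {n : ℕ} {u v : Fin (2*n)} : (BG n).Adj u v ↔ mrel n u v ∨ mrel n v u := Iff.rfl

lemma BG_cross {n : ℕ} {u v : Fin (2*n)} (h : (BG n).Adj u v) :
    (u.val < n ∧ n ≤ v.val) ∨ (v.val < n ∧ n ≤ u.val) := by
  rcases h with h|h
  · exact Or.inl ⟨h.1, h.2.1⟩
  · exact Or.inr ⟨h.1, h.2.1⟩

lemma card_val_filter {m : ℕ} (p : ℕ → Prop) [DecidablePred p] :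
    (univ.filter fun i : Fin m => p i.val).card = ((Finset.Iio m).filter p).card := by
  rw [← Fin.map_valEmbedding_univ, Finset.filter_map, Finset.card_map]
  rfl

lemma filter_Iio_card {m a b : ℕ} (p : ℕ → Prop) [DecidablePred p]
    (h : ∀ x, x < m → (p x ↔ a ≤ x ∧ x < b)) (hbm : b ≤ m) :
    ((Finset.Iio m).filter p).card = b - a := by
  have : (Finset.Iio m).filter p = Finset.Ico a b := by
    ext x
    simp only [mem_filter, Finset.mem_Iio, Finset.mem_Ico]
    constructor
    · rintro ⟨h1, h2⟩; have := (h x h1).1 h2; omega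
    · rintro ⟨h1, h2⟩; exact ⟨by omega, (h x (by omega)).2 ⟨h1, h2⟩⟩
  rw [this, Nat.card_Ico]

lemma deg_a1 {n : ℕ} (hn : 2 ≤ n) {v : Fin (2*n)} (hv : v.val = 0) :
    (BG n).degree v = (n+1)/2 := by
  rw [← card_neighborFinset_eq_degree, neighborFinset_eq_filter]
  have : ∀ u : Fin (2*n), (BG n).Adj v u ↔ n + n/2 ≤ u.val := by
    intro u
    have h2 := u.isLt
    simp only [BG_adj, mrel, hv, true_and, zero_lt_iff, Nat.le_zero, not_and, not_lt, not_le]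
    omega
  rw [filter_congr (fun u _ => by rw [this u]), card_val_filter]
  rw [filter_Iio_card (a := n + n/2) (b := 2*n) _ (by intro x hx; omega) (by omega)]
  omega

lemma deg_ge {n : ℕ} (hn : 2 ≤ n) (v : Fin (2*n)) : (n+1)/2 ≤ (BG n).degree v := by
  have hvlt := v.isLt
  have key : ∀ (q : ℕ → Prop) [DecidablePred q], (∀ u : Fin (2*n), q u.val → (BG n).Adj v u) →
      ((Finset.Iio (2*n)).filter q).card ≤ (BG n).degree v := by
    intro q _ hq
    rw [← card_neighborFinset_eq_degree, neighborFinset_eq_filter, ← card_val_filter]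
    apply Finset.card_le_card
    intro u hu
    simp only [mem_filter, mem_univ, true_and] at hu ⊢
    exact hq u hu
  rcases lt_or_ge v.val n with hv | hv
  · rcases Nat.lt_or_ge v.val 2 with hv2 | hv2
    · rcases Nat.lt_or_ge v.val 1 with hv0 | hv1
      · rw [deg_a1 hn (by omega)]
      · -- v.val = 1
        have := key (fun x => n ≤ x ∧ x < n + (n+1)/2)
          (by intro u hu; obtain ⟨hu1, hu2⟩ := hu; exact Or.inl (by simp only [mrel]; omega))
        rw [filter_Iio_card (a := n) (b := n + (n+1)/2) _ (by intro x hx; omega) (by omega)] at this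
        omega
    · -- 2 ≤ v.val < n : full degree
      have := key (fun x => n ≤ x)
        (by intro u hu; have hu1 : n ≤ u.val := hu; exact Or.inl (by simp only [mrel]; omega))
      rw [filter_Iio_card (a := n) (b := 2*n) _ (by intro x hx; omega) (by omega)] at this
      omega
  · rcases Nat.lt_or_ge v.val (n + n/2) with hv2 | hv2
    · -- adjacent to all of [1, n)
      have := key (fun x => 1 ≤ x ∧ x < n)
        (by intro u hu; obtain ⟨hu1, hu2⟩ := hu; exact Or.inr (by simp only [mrel]; omega))
      rw [filter_Iio_card (a := 1) (b := n) _ (by intro x hx; omega) (by omega)] at this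
      omega
    · -- adjacent to 0 and all of [2, n)
      have := key (fun x => x < n ∧ x ≠ 1)
        (by intro u hu; obtain ⟨hu1, hu2⟩ := hu; exact Or.inr (by simp only [mrel]; omega))
      have hc : ((Finset.Iio (2*n)).filter (fun x => x < n ∧ x ≠ 1)).card = n - 1 := by
        have : (Finset.Iio (2*n)).filter (fun x => x < n ∧ x ≠ 1) = (Finset.Iio n).erase 1 := by
          ext x
          simp only [mem_filter, Finset.mem_Iio, Finset.mem_erase]
          omega
        rw [this, Finset.card_erase_of_mem (by simp; omega), Nat.card_Iio]
      rw [hc] at this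
      omega

lemma three_mem {α : Type*} [DecidableEq α] {T : Finset α} (h : 3 ≤ T.card) :
    ∃ x ∈ T, ∃ y ∈ T, ∃ z ∈ T, x ≠ y ∧ x ≠ z ∧ y ≠ z := by
  obtain ⟨x, hx⟩ := Finset.card_pos.1 (show 0 < T.card by omega)
  have h2 : 2 ≤ (T.erase x).card := by rw [Finset.card_erase_of_mem hx]; omega
  obtain ⟨y, hy⟩ := Finset.card_pos.1 (by omega : 0 < (T.erase x).card)
  have h3 : 1 ≤ ((T.erase x).erase y).card := by
    rw [Finset.card_erase_of_mem hy]; omega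
  obtain ⟨z, hz⟩ := Finset.card_pos.1 (by omega : 0 < ((T.erase x).erase y).card)
  obtain ⟨hzy, hz'⟩ := Finset.mem_erase.1 hz
  obtain ⟨hzx, hzT⟩ := Finset.mem_erase.1 hz'
  obtain ⟨hyx, hyT⟩ := Finset.mem_erase.1 hy
  exact ⟨x, hx, y, hyT, z, hzT, fun h => hyx h.symm, fun h => hzx h.symm, fun h => hzy h.symm⟩

section
variable {n : ℕ}

lemma forest_ub (hn : 2 ≤ n) (S : Finset (Fin (2*n)))
    (hac : ((BG n).induce (S : Set (Fin (2*n)))).IsAcyclic) : S.card ≤ n + 2 := by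
  by_contra hk
  push_neg at hk
  classical
  set S1 := S.filter (fun v => v.val < n) with hS1
  set S2 := S.filter (fun v => ¬ v.val < n) with hS2
  have hsum : S1.card + S2.card = S.card := Finset.card_filter_add_card_filter_not _
  have hfull : ∀ (q : ℕ → Prop) [DecidablePred q],
      (S.filter (fun v => q v.val)).card ≤ ((Finset.Iio (2*n)).filter q).card := by
    intro q _
    rw [← card_val_filter]
    exact Finset.card_le_card (fun u hu => by
      simp only [Finset.mem_filter, Finset.mem_univ, true_and] at hu ⊢; exact hu.2)
  have h1n : S1.card ≤ n := by
    have := hfull (fun x => x < n)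
    rw [← hS1] at this
    rw [filter_Iio_card (a := 0) (b := n) _ (by intro x hx; omega) (by omega)] at this
    omega
  have h2n : S2.card ≤ n := by
    have := hfull (fun x => ¬ x < n)
    rw [← hS2] at this
    rw [filter_Iio_card (a := n) (b := 2*n) _ (by intro x hx; omega) (by omega)] at this
    omega
  have h13 : 3 ≤ S1.card := by omega
  have h23 : 3 ≤ S2.card := by omega
  -- the 4-cycle machine
  have cyc : ∀ u v b b' : Fin (2*n), u ∈ S → v ∈ S → b ∈ S → b' ∈ S → u ≠ v → b ≠ b' →
      (BG n).Adj u b → (BG n).Adj v b → (BG n).Adj u b' → (BG n).Adj v b' → False := by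
    intro u v b b' hu hv hb hb' huv hbb' h1 h2 h3 h4
    refine not_acyclic_of_fourCycle (H := (BG n).induce (S : Set (Fin (2*n))))
      (a := ⟨u, hu⟩) (b := ⟨b, hb⟩) (c := ⟨v, hv⟩) (d := ⟨b', hb'⟩)
      h1 h2.symm h4 h3.symm ?_ ?_ hac
    · exact fun h => huv (congrArg Subtype.val h)
    · exact fun h => hbb' (congrArg Subtype.val h)
  -- adjacency helpers
  have adjA1 : ∀ u b : Fin (2*n), u.val = 0 → n + n/2 ≤ b.val → (BG n).Adj u b := by
    intro u b hu hb
    exact Or.inl (by simp only [mrel]; have := b.isLt; omega)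
  have adjA2 : ∀ u b : Fin (2*n), u.val = 1 → n ≤ b.val → b.val < n + n/2 → (BG n).Adj u b := by
    intro u b hu hb hb'
    exact Or.inl (by simp only [mrel]; omega)
  have adjFull : ∀ u b : Fin (2*n), 2 ≤ u.val → u.val < n → n ≤ b.val → (BG n).Adj u b := by
    intro u b h2 hun hb
    exact Or.inl (by simp only [mrel]; omega)
  obtain ⟨b1, hb1, b2, hb2, b3, hb3, hb12, hb13, hb23⟩ := three_mem h23
  rw [hS2, Finset.mem_filter] at hb1 hb2 hb3
  obtain ⟨x, hx, y, hy, z, hz, hxy, hxz, hyz⟩ := three_mem h13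
  rw [hS1, Finset.mem_filter] at hx hy hz
  have hvxy : x.val ≠ y.val := fun h => hxy (Fin.ext h)
  have hvxz : x.val ≠ z.val := fun h => hxz (Fin.ext h)
  have hvyz : y.val ≠ z.val := fun h => hyz (Fin.ext h)
  by_cases hA : (∃ u ∈ S, u.val = 0) ∧ (∃ u ∈ S, u.val = 1)
  · -- both a1, a2 present : get x3 with val ≥ 2, pigeonhole the b's
    obtain ⟨⟨p, hpS, hp0⟩, ⟨q, hqS, hq1⟩⟩ := hA
    have hx3 : ∃ w, w ∈ S ∧ 2 ≤ w.val ∧ w.val < n := by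
      rcases Nat.lt_or_ge x.val 2 with c1 | c1
      · rcases Nat.lt_or_ge y.val 2 with c2 | c2
        · exact ⟨z, hz.1, by omega, hz.2⟩
        · exact ⟨y, hy.1, c2, hy.2⟩
      · exact ⟨x, hx.1, c1, hx.2⟩
    obtain ⟨w, hwS, hw2, hwn⟩ := hx3
    have main2 : ∀ b b' : Fin (2*n), b ∈ S → b' ∈ S → b ≠ b' → n ≤ b.val → n ≤ b'.val →
        ((n + n/2 ≤ b.val ∧ n + n/2 ≤ b'.val) ∨ (b.val < n + n/2 ∧ b'.val < n + n/2)) →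
        False := by
      rintro b b' hbS hb'S hne hbn hb'n (⟨c1, c2⟩ | ⟨c1, c2⟩)
      · exact cyc p w b b' hpS hwS hbS hb'S (fun h => by rw [h] at hp0; omega) hne
          (adjA1 p b hp0 c1) (adjFull w b hw2 hwn hbn)
          (adjA1 p b' hp0 c2) (adjFull w b' hw2 hwn hb'n)
      · exact cyc q w b b' hqS hwS hbS hb'S (fun h => by rw [h] at hq1; omega) hne
          (adjA2 q b hq1 hbn c1) (adjFull w b hw2 hwn hbn)
          (adjA2 q b' hq1 hb'n c2) (adjFull w b' hw2 hwn hb'n)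
    have hn1 : n ≤ b1.val := by omega
    have hn2 : n ≤ b2.val := by omega
    have hn3 : n ≤ b3.val := by omega
    by_cases c1 : n + n/2 ≤ b1.val <;> by_cases c2 : n + n/2 ≤ b2.val <;>
      by_cases c3 : n + n/2 ≤ b3.val
    all_goals first
      | exact main2 b1 b2 hb1.1 hb2.1 hb12 hn1 hn2 (by omega)
      | exact main2 b1 b3 hb1.1 hb3.1 hb13 hn1 hn3 (by omega)
      | exact main2 b2 b3 hb2.1 hb3.1 hb23 hn2 hn3 (by omega)
  · -- one of a1, a2 absent: two fully-adjacent vertices exist in S1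
    have noBoth : ∀ u w : Fin (2*n), u ∈ S → w ∈ S → u.val ≤ 1 → w.val ≤ 1 → u ≠ w → False := by
      intro u w huS hwS hu1 hw1 hne
      have hv : u.val ≠ w.val := fun h => hne (Fin.ext h)
      apply hA
      constructor
      · rcases Nat.eq_zero_or_pos u.val with h0 | h0
        · exact ⟨u, huS, h0⟩
        · exact ⟨w, hwS, by omega⟩
      · rcases Nat.eq_zero_or_pos u.val with h0 | h0
        · exact ⟨w, hwS, by omega⟩
        · exact ⟨u, huS, by omega⟩
    have hgood : ∃ u v : Fin (2*n), u ∈ S ∧ v ∈ S ∧ u ≠ v ∧ 2 ≤ u.val ∧ u.val < n ∧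
        2 ≤ v.val ∧ v.val < n := by
      rcases Nat.lt_or_ge x.val 2 with c1 | c1
      · rcases Nat.lt_or_ge y.val 2 with c2 | c2
        · exact absurd (noBoth x y hx.1 hy.1 (by omega) (by omega) hxy) not_false
        · rcases Nat.lt_or_ge z.val 2 with c3 | c3
          · exact absurd (noBoth x z hx.1 hz.1 (by omega) (by omega) hxz) not_false
          · exact ⟨y, z, hy.1, hz.1, hyz, c2, hy.2, c3, hz.2⟩
      · rcases Nat.lt_or_ge y.val 2 with c2 | c2
        · rcases Nat.lt_or_ge z.val 2 with c3 | c3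
          · exact absurd (noBoth y z hy.1 hz.1 (by omega) (by omega) hyz) not_false
          · exact ⟨x, z, hx.1, hz.1, hxz, c1, hx.2, c3, hz.2⟩
        · exact ⟨x, y, hx.1, hy.1, hxy, c1, hx.2, c2, hy.2⟩
    obtain ⟨u, v, huS, hvS, huv, hu2, hun, hv2, hvn⟩ := hgood
    exact cyc u v b1 b2 huS hvS hb1.1 hb2.1 huv hb12
      (adjFull u b1 hu2 hun (by omega)) (adjFull v b1 hv2 hvn (by omega))
      (adjFull u b2 hu2 hun (by omega)) (adjFull v b2 hv2 hvn (by omega))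
end


def S0 (n : ℕ) : Finset (Fin (2*n)) := univ.filter (fun v => v.val ≤ 1 ∨ n ≤ v.val)

lemma S0_card {n : ℕ} (hn : 2 ≤ n) : (S0 n).card = n + 2 := by
  rw [S0, card_val_filter (p := fun x => x ≤ 1 ∨ n ≤ x)]
  have : (Finset.Iio (2*n)).filter (fun x => x ≤ 1 ∨ n ≤ x)
      = insert 0 (insert 1 (Finset.Ico n (2*n))) := by
    ext x
    simp only [mem_filter, Finset.mem_Iio, Finset.mem_insert, Finset.mem_Ico]
    omega
  rw [this, Finset.card_insert_of_notMem (by simp only [Finset.mem_insert, Finset.mem_Ico]; omega),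
    Finset.card_insert_of_notMem (by simp only [Finset.mem_insert, Finset.mem_Ico]; omega), Nat.card_Ico]
  omega

lemma mem_S0 {n : ℕ} {v : Fin (2*n)} : v ∈ S0 n ↔ v.val ≤ 1 ∨ n ≤ v.val := by
  simp [S0]

lemma S0_acyclic {n : ℕ} (hn : 2 ≤ n) :
    ((BG n).induce ((S0 n : Finset (Fin (2*n))) : Set (Fin (2*n)))).IsAcyclic := by
  set H := (BG n).induce ((S0 n : Finset (Fin (2*n))) : Set (Fin (2*n))) with hH
  have memW : ∀ z : ((S0 n : Finset (Fin (2*n))) : Set (Fin (2*n))),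
      z.1.val ≤ 1 ∨ n ≤ z.1.val := by
    intro z
    have := z.2
    rw [Finset.mem_coe, mem_S0] at this
    exact this
  have key : ∀ (p q : ((S0 n : Finset (Fin (2*n))) : Set (Fin (2*n)))),
      (BG n).Adj p.1 q.1 → p.1.val ≤ 1 → n ≤ q.1.val →
      ¬ (H \ fromEdgeSet {s(p, q)}).Reachable p q := by
    intro p q hpq hp1 hqn
    have ha'mem : (⟨1 - p.1.val, by omega⟩ : Fin (2*n)) ∈
        ((S0 n : Finset (Fin (2*n))) : Set (Fin (2*n))) := by
      rw [Finset.mem_coe, mem_S0]; exact Or.inl (by show 1 - p.1.val ≤ 1; omega)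
    set a' : ((S0 n : Finset (Fin (2*n))) : Set (Fin (2*n))) :=
      ⟨⟨1 - p.1.val, by omega⟩, ha'mem⟩ with ha'
    have ha'v : a'.1.val = 1 - p.1.val := rfl
    have hpa' : p ≠ a' := by
      intro h
      have h2 : p.1.val = a'.1.val := congrArg (fun t => t.1.val) h
      rw [ha'v] at h2
      omega
    have hnadj : ¬ (BG n).Adj a'.1 p.1 := by
      intro h
      rcases BG_cross h with ⟨h1, h2⟩ | ⟨h1, h2⟩ <;> omega
    -- adjacency from the low side forces interval constraints
    have adjc : ∀ (u b : Fin (2*n)), u.val ≤ 1 → n ≤ b.val → (BG n).Adj u b →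
        (u.val = 0 → n + n/2 ≤ b.val) ∧ (u.val = 1 → b.val < n + (n+1)/2) := by
      intro u b hu hb h
      rcases h with h | h
      · simp only [mrel] at h
        constructor <;> intro <;> omega
      · simp only [mrel] at h
        omega
    have uniq : ∀ b b' : ((S0 n : Finset (Fin (2*n))) : Set (Fin (2*n))),
        n ≤ b.1.val → n ≤ b'.1.val →
        (BG n).Adj p.1 b.1 → (BG n).Adj a'.1 b.1 →
        (BG n).Adj p.1 b'.1 → (BG n).Adj a'.1 b'.1 → b = b' := by
      intro b b' hb hb' h1 h2 h3 h4
      have c1 := adjc p.1 b.1 hp1 hb h1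
      have c2 := adjc a'.1 b.1 (by omega) hb h2
      have c3 := adjc p.1 b'.1 hp1 hb' h3
      have c4 := adjc a'.1 b'.1 (by omega) hb' h4
      have : b.1.val = b'.1.val := by
        rcases Nat.eq_zero_or_pos p.1.val with h0 | h0 <;>
          [ (have e1 := c1.1 h0; have e2 := c2.2 (by omega);
             have e3 := c3.1 h0; have e4 := c4.2 (by omega); omega);
            (have e1 := c1.2 (by omega); have e2 := c2.1 (by omega);
             have e3 := c3.2 (by omega); have e4 := c4.1 (by omega); omega)]
      exact Subtype.ext (Fin.ext this)
    have hPA : ∀ w : ((S0 n : Finset (Fin (2*n))) : Set (Fin (2*n))),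
        w.1.val < n → w = p ∨ w = a' := by
      intro w hw
      have h2 := memW w
      have : w.1.val = p.1.val ∨ w.1.val = 1 - p.1.val := by omega
      rcases this with h | h
      · exact Or.inl (Subtype.ext (Fin.ext h))
      · exact Or.inr (Subtype.ext (Fin.ext (by rw [h, ha'v])))
    by_cases hb' : (BG n).Adj a'.1 q.1
    · -- q is doubly adjacent; closed set is a' together with its neighbors
      set C : Set ((S0 n : Finset (Fin (2*n))) : Set (Fin (2*n))) :=
        {z | z = a' ∨ (BG n).Adj a'.1 z.1} with hC
      have hclosed : ∀ ⦃z w⦄, z ∈ C → (H \ fromEdgeSet {s(p, q)}).Adj z w → w ∈ C := by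
        intro z w hz hzw
        rw [sdiff_adj] at hzw
        obtain ⟨hzw1, hzw2⟩ := hzw
        have hzw1' : (BG n).Adj z.1 w.1 := hzw1
        rcases hz with rfl | hz
        · exact Or.inr hzw1'
        · -- z is on the big side
          have hzn : n ≤ z.1.val := by
            rcases BG_cross hz with ⟨h1, h2⟩ | ⟨h1, h2⟩ <;> omega
          have hwn : w.1.val < n := by
            rcases BG_cross hzw1' with ⟨h1, h2⟩ | ⟨h1, h2⟩ <;> omega
          rcases hPA w hwn with hw | hw
          · -- w = p : z is doubly adjacent, so z = q and the edge was deleted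
            exfalso
            have hz2 : (BG n).Adj p.1 z.1 := by rw [← hw]; exact hzw1'.symm
            have hzq : z = q := uniq z q hzn hqn hz2 hz hpq hb'
            apply hzw2
            rw [fromEdgeSet_adj]
            refine ⟨?_, hzw1.ne⟩
            have he : s(z, w) = s(p, q) := by rw [hw, hzq]; exact Sym2.eq_swap
            rw [he]
            exact Set.mem_singleton _
          · exact Or.inl hw
      have hqC : q ∈ C := Or.inr hb'
      have hpC : p ∉ C := by
        intro h
        rcases h with h | h
        · exact hpa' h
        · exact hnadj h
      exact fun h => (not_reachable_of_closed C hclosed hqC hpC) h.symm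
    · -- q has a single neighbor p; C = {q}
      set C : Set ((S0 n : Finset (Fin (2*n))) : Set (Fin (2*n))) := {z | z = q} with hC
      have hclosed : ∀ ⦃z w⦄, z ∈ C → (H \ fromEdgeSet {s(p, q)}).Adj z w → w ∈ C := by
        intro z w hz hzw
        rw [sdiff_adj] at hzw
        obtain ⟨hzw1, hzw2⟩ := hzw
        have hzq : z = q := hz
        have hzw1' : (BG n).Adj z.1 w.1 := hzw1
        exfalso
        have hzn : n ≤ z.1.val := by rw [hzq]; exact hqn
        have hwn : w.1.val < n := by
          rcases BG_cross hzw1' with ⟨h1, h2⟩ | ⟨h1, h2⟩ <;> omega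
        rcases hPA w hwn with hw | hw
        · apply hzw2
          rw [fromEdgeSet_adj]
          refine ⟨?_, hzw1.ne⟩
          have he : s(z, w) = s(p, q) := by rw [hw, hzq]; exact Sym2.eq_swap
          rw [he]
          exact Set.mem_singleton _
        · apply hb'
          rw [← hw, ← hzq]
          exact hzw1'.symm
      have hqC : q ∈ C := rfl
      have hpC : p ∉ C := by
        intro h
        have : p.1.val = q.1.val := by rw [h]
        omega
      exact fun h => (not_reachable_of_closed C hclosed hqC hpC) h.symm
  rw [isAcyclic_iff_forall_adj_isBridge]
  intro x y hadj
  have hadj' : (BG n).Adj x.1 y.1 := hadj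
  rcases BG_cross hadj' with ⟨h1, h2⟩ | ⟨h1, h2⟩
  · have hx1 : x.1.val ≤ 1 := by have := memW x; omega
    exact isBridge_iff.2 (key x y hadj' hx1 h2)
  · have hy1 : y.1.val ≤ 1 := by have := memW y; omega
    rw [Sym2.eq_swap]
    exact isBridge_iff.2 (key y x hadj'.symm hy1 h2)

/-- The forest number of `G`: the maximum size of a vertex subset inducing an acyclic
(induced) subgraph. -/
noncomputable def forestNum {V : Type} [Fintype V] (G : SimpleGraph V) : ℕ :=
  sSup {k | ∃ S : Finset V, S.card = k ∧ (G.induce (S : Set V)).IsAcyclic}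

theorem stmt3 (n : ℕ) (hn : 2 ≤ n) :
    ∃ (G : SimpleGraph (Fin (2 * n))) (_ : DecidableRel G.Adj)
      (V1 V2 : Finset (Fin (2 * n))),
      Disjoint V1 V2 ∧ V1 ∪ V2 = Finset.univ ∧ V1.card = n ∧ V2.card = n ∧
      (∀ u v, G.Adj u v → (u ∈ V1 ∧ v ∈ V2) ∨ (u ∈ V2 ∧ v ∈ V1)) ∧
      (∀ v, (n + 1) / 2 ≤ G.degree v) ∧ (∃ v, G.degree v = (n + 1) / 2) ∧
      forestNum G = n + 2 := by
  refine ⟨BG n, inferInstance, univ.filter (fun v => v.val < n),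
    univ.filter (fun v => n ≤ v.val), ?_, ?_, ?_, ?_, ?_, ?_, ?_, ?_⟩
  · rw [Finset.disjoint_left]
    intro a ha hb
    rw [Finset.mem_filter] at ha hb
    omega
  · ext a
    simp only [Finset.mem_union, Finset.mem_filter, Finset.mem_univ, true_and, iff_true]
    omega
  · rw [card_val_filter (p := fun x => x < n),
      filter_Iio_card (a := 0) (b := n) _ (by intro x hx; omega) (by omega)]
    omega
  · rw [card_val_filter (p := fun x => n ≤ x),
      filter_Iio_card (a := n) (b := 2*n) _ (by intro x hx; omega) (by omega)]
    omega
  · intro u v h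
    rcases BG_cross h with ⟨h1, h2⟩ | ⟨h1, h2⟩
    · exact Or.inl ⟨Finset.mem_filter.2 ⟨Finset.mem_univ _, h1⟩,
        Finset.mem_filter.2 ⟨Finset.mem_univ _, h2⟩⟩
    · exact Or.inr ⟨Finset.mem_filter.2 ⟨Finset.mem_univ _, h2⟩,
        Finset.mem_filter.2 ⟨Finset.mem_univ _, h1⟩⟩
  · exact deg_ge hn
  · exact ⟨⟨0, by omega⟩, deg_a1 hn rfl⟩
  · unfold forestNum
    have hne : Set.Nonempty {k | ∃ S : Finset (Fin (2*n)), S.card = k ∧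
        ((BG n).induce (S : Set (Fin (2*n)))).IsAcyclic} :=
      ⟨n + 2, S0 n, S0_card hn, S0_acyclic hn⟩
    apply le_antisymm
    · apply csSup_le hne
      rintro k ⟨S, rfl, hS⟩
      exact forest_ub hn S hS
    · apply le_csSup
      · refine ⟨2 * n, ?_⟩
        rintro k ⟨S, rfl, -⟩
        simpa using Finset.card_le_univ S
      · exact ⟨S0 n, S0_card hn, S0_acyclic hn⟩
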